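/- Let G be a connected graph with π*_2(G) ≤ 4. Then there exist vertices x and y of G such that the distribution placing 2 pebbles on each of x and y (and 0 elsewhere) is solvable. -/

import Mathlib

open Finset

/-- A single pebbling move: remove two pebbles from `u` and place one on an
adjacent vertex `v`. -/
def PebblingStep {V : Type*} [DecidableEq V] (G : SimpleGraph V) (D D' : V → ℕ) : Prop :=
  ∃ u v, G.Adj u v ∧ 2 ≤ D u ∧
    D' = Function.update (Function.update D u (D u - 2)) v (D v + 1)

/-- `D'` is obtained from `D` by an executable sequence of pebbling moves. -/
def PebblingReaches {V : Type*} [DecidableEq V] (G : SimpleGraph V) : (V → ℕ) → (V → ℕ) → Prop :=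
  Relation.ReflTransGen (PebblingStep G)

/-- A vertex `v` is `k`-reachable under `D`. -/
def KReachable {V : Type*} [DecidableEq V] (G : SimpleGraph V) (D : V → ℕ) (k : ℕ) (v : V) : Prop :=
  ∃ D', PebblingReaches G D D' ∧ k ≤ D' v

/-- A distribution is solvable if every vertex is (1-)reachable. -/
def Solvable {V : Type*} [DecidableEq V] (G : SimpleGraph V) (D : V → ℕ) : Prop :=
  ∀ v, KReachable G D 1 v

/-- The size of a pebble distribution. -/
def distSize {V : Type*} [Fintype V] (D : V → ℕ) : ℕ := ∑ v, D v

/-- The optimal pebbling number `π*`. -/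
noncomputable def optPebbling {V : Type*} [Fintype V] [DecidableEq V] (G : SimpleGraph V) : ℕ :=
  sInf {n | ∃ D : V → ℕ, Solvable G D ∧ distSize D = n}

/-- The `t`-restricted optimal pebbling number `π*_t`. -/
noncomputable def optPebblingRes {V : Type*} [Fintype V] [DecidableEq V]
    (G : SimpleGraph V) (t : ℕ) : ℕ :=
  sInf {n | ∃ D : V → ℕ, (∀ v, D v ≤ t) ∧ Solvable G D ∧ distSize D = n}

section Aux
variable {V : Type*} [DecidableEq V] {G : SimpleGraph V}

lemma reaches_mono {D D' F : V → ℕ} (hle : ∀ v, D v ≤ D' v)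
    (h : PebblingReaches G D F) : ∃ F', PebblingReaches G D' F' ∧ ∀ v, F v ≤ F' v := by
  induction h with
  | refl => exact ⟨D', Relation.ReflTransGen.refl, hle⟩
  | tail hreach hstep ih =>
    obtain ⟨F', hF', hle'⟩ := ih
    obtain ⟨u, t, hadj, h2, rfl⟩ := hstep
    have hut : u ≠ t := hadj.ne
    refine ⟨Function.update (Function.update F' u (F' u - 2)) t (F' t + 1),
      hF'.tail ⟨u, t, hadj, le_trans h2 (hle' u), rfl⟩, ?_⟩
    intro v
    have e1 : ∀ (Dd : V → ℕ) (w : V),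
        Function.update (Function.update Dd u (Dd u - 2)) t (Dd t + 1) w
          = if w = t then Dd t + 1 else if w = u then Dd u - 2 else Dd w := by
      intro Dd w
      by_cases h1 : w = t
      · subst h1; simp [Function.update_apply]
      · by_cases h1b : w = u <;> simp [Function.update_apply, h1, h1b]
    rw [e1, e1]
    have := hle' v; have := hle' u; have := hle' t
    split_ifs <;> omega

lemma solvable_mono {D D' : V → ℕ} (hle : ∀ v, D v ≤ D' v) (h : Solvable G D) :
    Solvable G D' := by
  intro v
  obtain ⟨F, hF, hv⟩ := h v
  obtain ⟨F', hF', hle'⟩ := reaches_mono hle hF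
  exact ⟨F', hF', le_trans hv (hle' v)⟩

lemma eq_of_reaches_of_small {D D' : V → ℕ} (hsmall : ∀ v, D v ≤ 1)
    (h : PebblingReaches G D D') : D' = D := by
  induction h with
  | refl => rfl
  | tail hreach hstep ih =>
    obtain ⟨u, t, hadj, h2, rfl⟩ := hstep
    rw [ih] at h2
    exact absurd h2 (by have := hsmall u; omega)

lemma exists_adj (hconn : G.Connected) (u w : V) (h : u ≠ w) : ∃ x, G.Adj u x := by
  obtain ⟨p⟩ := hconn.preconnected u w
  cases p with
  | nil => exact absurd rfl h
  | cons hadj _ => exact ⟨_, hadj⟩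

lemma walk_stuck {p q : V} (hp : ∀ x, G.Adj p x → x = q) (hq : ∀ x, G.Adj q x → x = p) :
    ∀ {u r : V}, G.Walk u r → (u = p ∨ u = q) → (r = p ∨ r = q) := by
  intro u r w
  induction w with
  | nil => exact id
  | cons hadj _ ih =>
    rintro (rfl | rfl)
    · exact ih (Or.inr (hp _ hadj))
    · exact ih (Or.inl (hq _ hadj))

lemma solvable_pair (x y : V)
    (hcov : ∀ v, v = x ∨ v = y ∨ G.Adj x v ∨ G.Adj y v ∨
      (x ≠ y ∧ ∃ z, G.Adj x z ∧ G.Adj y z ∧ G.Adj z v)) :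
    Solvable G (fun v => if v = x ∨ v = y then 2 else 0) := by
  set E : V → ℕ := fun v => if v = x ∨ v = y then 2 else 0 with hE
  have hEx : E x = 2 := by simp [hE]
  have hEy : E y = 2 := by simp [hE]
  intro v
  rcases hcov v with rfl | rfl | hxv | hyv | ⟨hxy, z, hxz, hyz, hzv⟩
  · exact ⟨E, Relation.ReflTransGen.refl, by omega⟩
  · exact ⟨E, Relation.ReflTransGen.refl, by omega⟩
  · refine ⟨_, Relation.ReflTransGen.single ⟨x, v, hxv, by omega, rfl⟩, ?_⟩
    simp [Function.update_apply]
  · refine ⟨_, Relation.ReflTransGen.single ⟨y, v, hyv, by omega, rfl⟩, ?_⟩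
    simp [Function.update_apply]
  · have hzx : z ≠ x := hxz.ne'
    have hzy : z ≠ y := hyz.ne'
    have hEz : E z = 0 := by simp [hE, hzx, hzy]
    set E1 := Function.update (Function.update E x (E x - 2)) z (E z + 1) with hE1
    have s1 : PebblingStep G E E1 := ⟨x, z, hxz, by omega, rfl⟩
    have hE1z : E1 z = 1 := by simp [hE1, Function.update_apply, hEz]
    have hE1y : E1 y = 2 := by
      simp [hE1, Function.update_apply, hzy.symm, hxy.symm, hEy]
    set E2 := Function.update (Function.update E1 y (E1 y - 2)) z (E1 z + 1) with hE2
    have s2 : PebblingStep G E1 E2 := ⟨y, z, hyz, by omega, rfl⟩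
    have hE2z : E2 z = 2 := by simp [hE2, Function.update_apply, hE1z]
    set E3 := Function.update (Function.update E2 z (E2 z - 2)) v (E2 v + 1) with hE3
    have s3 : PebblingStep G E2 E3 := ⟨z, v, hzv, by omega, rfl⟩
    refine ⟨E3, ((Relation.ReflTransGen.single s1).tail s2).tail s3, ?_⟩
    simp [hE3, Function.update_apply]

lemma solvable_full (G : SimpleGraph V) : Solvable G (fun _ => 2) :=
  fun v => ⟨_, Relation.ReflTransGen.refl, one_le_two⟩


lemma inv_of_reaches {a b c : V} (hab : a ≠ b) (hac : a ≠ c) (hbc : b ≠ c)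
    {D' : V → ℕ}
    (h : PebblingReaches G (fun v => if v = a then 2 else if v = b ∨ v = c then 1 else 0) D') :
    (∀ v, D' v ≤ 2) ∧
    (∀ v, 1 ≤ D' v → v = a ∨ v = b ∨ v = c ∨ G.Adj a v ∨
        ((G.Adj a b ∨ (G.Adj a c ∧ G.Adj c b)) ∧ G.Adj b v) ∨
        ((G.Adj a c ∨ (G.Adj a b ∧ G.Adj b c)) ∧ G.Adj c v)) ∧
    (∀ v, 2 ≤ D' v → v = a ∨ (v = b ∧ (G.Adj a b ∨ (G.Adj a c ∧ G.Adj c b))) ∨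
        (v = c ∧ (G.Adj a c ∨ (G.Adj a b ∧ G.Adj b c)))) ∧
    (∀ v w, v ≠ w → 2 ≤ D' v → 2 ≤ D' w → False) ∧
    (∀ v w, v ≠ w → 2 ≤ D' v → 1 ≤ D' w →
        (v = a ∧ (w = b ∨ w = c)) ∨ (v = b ∧ w = c) ∨ (v = c ∧ w = b)) := by
  induction h with
  | refl =>
    refine ⟨?_, ?_, ?_, ?_, ?_⟩
    · intro v; dsimp only; split_ifs <;> omega
    · intro v hv; dsimp only at hv
      by_cases hva : v = a
      · exact Or.inl hva
      · rw [if_neg hva] at hv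
        by_cases hvbc : v = b ∨ v = c
        · tauto
        · rw [if_neg hvbc] at hv; omega
    · intro v hv; dsimp only at hv
      by_cases hva : v = a
      · exact Or.inl hva
      · rw [if_neg hva] at hv; split_ifs at hv <;> omega
    · intro v w hvw hv hw; dsimp only at hv hw
      have hva : v = a := by
        by_contra hh; rw [if_neg hh] at hv; split_ifs at hv <;> omega
      have hwa : w = a := by
        by_contra hh; rw [if_neg hh] at hw; split_ifs at hw <;> omega
      exact hvw (hva.trans hwa.symm)
    · intro v w hvw hv hw; dsimp only at hv hw
      have hva : v = a := by
        by_contra hh; rw [if_neg hh] at hv; split_ifs at hv <;> omega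
      have hwa : w ≠ a := fun hh => hvw (hva.trans hh.symm)
      rw [if_neg hwa] at hw
      by_cases hwbc : w = b ∨ w = c
      · exact Or.inl ⟨hva, hwbc⟩
      · rw [if_neg hwbc] at hw; omega
  | tail hreach hstep ih =>
    rename_i M F
    obtain ⟨cap, h1, h2, h3, h4⟩ := ih
    obtain ⟨u, t, hadj, h2u, rfl⟩ := hstep
    have hut : u ≠ t := hadj.ne
    have hM2 : M u = 2 := le_antisymm (cap u) h2u
    have hMt : M t ≤ 1 := by
      by_contra hh; exact h3 u t hut h2u (by omega)
    have Tu := h2 u h2u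
    have ev : ∀ w, Function.update (Function.update M u (M u - 2)) t (M t + 1) w
        = if w = t then M t + 1 else if w = u then 0 else M w := by
      intro w
      by_cases hwt : w = t
      · subst hwt; simp [Function.update_apply]
      · by_cases hwu : w = u
        · subst hwu; simp [Function.update_apply, hwt, hM2]
        · simp [Function.update_apply, hwt, hwu]
    refine ⟨?_, ?_, ?_, ?_, ?_⟩
    · intro v; rw [ev v]; have := cap v; split_ifs <;> omega
    · intro v hv; rw [ev v] at hv
      split_ifs at hv with hvt hvu
      · subst hvt
        rcases Tu with rfl | ⟨rfl, hPb⟩ | ⟨rfl, hPc⟩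
        · exact Or.inr (Or.inr (Or.inr (Or.inl hadj)))
        · exact Or.inr (Or.inr (Or.inr (Or.inr (Or.inl ⟨hPb, hadj⟩))))
        · exact Or.inr (Or.inr (Or.inr (Or.inr (Or.inr ⟨hPc, hadj⟩))))
      · omega
      · exact h1 v hv
    · intro v hv; rw [ev v] at hv
      split_ifs at hv with hvt hvu
      · have h4' := h4 u t hut h2u (by omega)
        subst hvt
        rcases h4' with ⟨hua, htb | htc⟩ | ⟨hub, htc⟩ | ⟨huc, htb⟩ <;>
          rcases Tu with hu | ⟨hu, hPb⟩ | ⟨hu, hPc⟩ <;>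
            subst_eqs <;> simp_all <;> tauto
      · omega
      · exact h2 v hv
    · intro v w hvw hv hw; rw [ev v] at hv; rw [ev w] at hw
      split_ifs at hv with hvt hvu
      · split_ifs at hw with hwt hwu
        · exact hvw (hvt.trans hwt.symm)
        · omega
        · exact h3 u w (fun he => hwu he.symm) h2u hw
      · omega
      · exact h3 u v (fun he => hvu he.symm) h2u hv
    · intro v w hvw hv hw; rw [ev v] at hv; rw [ev w] at hw
      split_ifs at hv with hvt hvu
      · have G1 := h4 u t hut h2u (by omega)
        split_ifs at hw with hwt hwu
        · exact absurd (hvt.trans hwt.symm) hvw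
        · omega
        · have G2 := h4 u w (fun he => hwu he.symm) h2u hw
          subst hvt
          rcases G1 with ⟨hua, htb | htc⟩ | ⟨hub, htc⟩ | ⟨huc, htb⟩ <;>
            rcases G2 with ⟨hua2, hwb | hwc⟩ | ⟨hub2, hwc2⟩ | ⟨huc2, hwb2⟩ <;>
              simp_all
      · omega
      · exact (h3 u v (fun he => hvu he.symm) h2u hv).elim

lemma pick_pair (hconn : G.Connected) (a b c : V) (hab : a ≠ b) (hac : a ≠ c) (hbc : b ≠ c)
    (hS : ∀ v, v = a ∨ v = b ∨ v = c ∨ G.Adj a v ∨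
        ((G.Adj a b ∨ (G.Adj a c ∧ G.Adj c b)) ∧ G.Adj b v) ∨
        ((G.Adj a c ∨ (G.Adj a b ∧ G.Adj b c)) ∧ G.Adj c v)) :
    ∃ x y, ∀ v, v = x ∨ v = y ∨ G.Adj x v ∨ G.Adj y v ∨
      (x ≠ y ∧ ∃ z, G.Adj x z ∧ G.Adj y z ∧ G.Adj z v) := by
  by_cases hab' : G.Adj a b
  · by_cases hac' : G.Adj a c
    · -- case A : pair (b, c)
      refine ⟨b, c, fun v => ?_⟩
      rcases hS v with rfl | rfl | rfl | hv | ⟨_, hv⟩ | ⟨_, hv⟩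
      · exact Or.inr (Or.inr (Or.inl hab'.symm))
      · exact Or.inl rfl
      · exact Or.inr (Or.inl rfl)
      · exact Or.inr (Or.inr (Or.inr (Or.inr ⟨hbc, a, hab'.symm, hac'.symm, hv⟩)))
      · exact Or.inr (Or.inr (Or.inl hv))
      · exact Or.inr (Or.inr (Or.inr (Or.inl hv)))
    · by_cases hbc' : G.Adj b c
      · -- case B1 : pair (a, c)
        refine ⟨a, c, fun v => ?_⟩
        rcases hS v with rfl | rfl | rfl | hv | ⟨_, hv⟩ | ⟨_, hv⟩
        · exact Or.inl rfl
        · exact Or.inr (Or.inr (Or.inl hab'))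
        · exact Or.inr (Or.inl rfl)
        · exact Or.inr (Or.inr (Or.inl hv))
        · exact Or.inr (Or.inr (Or.inr (Or.inr ⟨hac, b, hab', hbc'.symm, hv⟩)))
        · exact Or.inr (Or.inr (Or.inr (Or.inl hv)))
      · -- case B2 : get a neighbor d of c
        obtain ⟨d, hcd⟩ := exists_adj hconn c a (Ne.symm hac)
        have hPc : ¬(G.Adj a c ∨ (G.Adj a b ∧ G.Adj b c)) := by tauto
        rcases hS d with rfl | rfl | rfl | had | ⟨_, hbd⟩ | ⟨hp, _⟩
        · exact absurd hcd.symm hac'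
        · exact absurd hcd.symm hbc'
        · exact absurd hcd (G.loopless.irrefl _)
        · -- B2a : pair (d, b)
          have hdb : d ≠ b := fun h => hbc' (by rw [h] at hcd; exact hcd.symm)
          refine ⟨d, b, fun v => ?_⟩
          rcases hS v with rfl | rfl | rfl | hv | ⟨_, hv⟩ | ⟨hp, _⟩
          · exact Or.inr (Or.inr (Or.inl had.symm))
          · exact Or.inr (Or.inl rfl)
          · exact Or.inr (Or.inr (Or.inl hcd.symm))
          · exact Or.inr (Or.inr (Or.inr (Or.inr ⟨hdb, a, had.symm, hab'.symm, hv⟩)))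
          · exact Or.inr (Or.inr (Or.inr (Or.inl hv)))
          · exact absurd hp hPc
        · -- B2b : pair (a, d)
          have had2 : a ≠ d := fun h => hac' (by rw [← h] at hcd; exact hcd.symm)
          refine ⟨a, d, fun v => ?_⟩
          rcases hS v with rfl | rfl | rfl | hv | ⟨_, hv⟩ | ⟨hp, _⟩
          · exact Or.inl rfl
          · exact Or.inr (Or.inr (Or.inl hab'))
          · exact Or.inr (Or.inr (Or.inr (Or.inl hcd.symm)))
          · exact Or.inr (Or.inr (Or.inl hv))
          · exact Or.inr (Or.inr (Or.inr (Or.inr ⟨had2, b, hab', hbd.symm, hv⟩)))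
          · exact absurd hp hPc
        · exact absurd hp hPc
  · by_cases hac' : G.Adj a c
    · by_cases hbc' : G.Adj c b
      · -- case C1 : pair (a, b)
        refine ⟨a, b, fun v => ?_⟩
        rcases hS v with rfl | rfl | rfl | hv | ⟨_, hv⟩ | ⟨_, hv⟩
        · exact Or.inl rfl
        · exact Or.inr (Or.inl rfl)
        · exact Or.inr (Or.inr (Or.inl hac'))
        · exact Or.inr (Or.inr (Or.inl hv))
        · exact Or.inr (Or.inr (Or.inr (Or.inl hv)))
        · exact Or.inr (Or.inr (Or.inr (Or.inr ⟨hab, c, hac', hbc'.symm, hv⟩)))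
      · -- case C2 : get a neighbor d of b
        obtain ⟨d, hbd⟩ := exists_adj hconn b a (Ne.symm hab)
        have hPb : ¬(G.Adj a b ∨ (G.Adj a c ∧ G.Adj c b)) := by tauto
        rcases hS d with rfl | rfl | rfl | had | ⟨hp, _⟩ | ⟨_, hcd⟩
        · exact absurd hbd.symm hab'
        · exact absurd hbd (G.loopless.irrefl _)
        · exact absurd hbd.symm hbc'
        · -- C2a : pair (d, c)
          have hdc : d ≠ c := fun h => hbc' (by rw [← h]; exact hbd.symm)
          refine ⟨d, c, fun v => ?_⟩
          rcases hS v with rfl | rfl | rfl | hv | ⟨hp, _⟩ | ⟨_, hv⟩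
          · exact Or.inr (Or.inr (Or.inl had.symm))
          · exact Or.inr (Or.inr (Or.inl hbd.symm))
          · exact Or.inr (Or.inl rfl)
          · exact Or.inr (Or.inr (Or.inr (Or.inr ⟨hdc, a, had.symm, hac'.symm, hv⟩)))
          · exact absurd hp hPb
          · exact Or.inr (Or.inr (Or.inr (Or.inl hv)))
        · exact absurd hp hPb
        · -- C2b : pair (a, d)
          have had2 : a ≠ d := fun h => hab' (by rw [← h] at hbd; exact hbd.symm)
          refine ⟨a, d, fun v => ?_⟩
          rcases hS v with rfl | rfl | rfl | hv | ⟨hp, _⟩ | ⟨_, hv⟩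
          · exact Or.inl rfl
          · exact Or.inr (Or.inr (Or.inr (Or.inl hbd.symm)))
          · exact Or.inr (Or.inr (Or.inl hac'))
          · exact Or.inr (Or.inr (Or.inl hv))
          · exact absurd hp hPb
          · exact Or.inr (Or.inr (Or.inr (Or.inr ⟨had2, c, hac', hcd.symm, hv⟩)))
    · -- case D : a adjacent to neither b nor c
      have hPb : ¬(G.Adj a b ∨ (G.Adj a c ∧ G.Adj c b)) := by tauto
      have hPc : ¬(G.Adj a c ∨ (G.Adj a b ∧ G.Adj b c)) := by tauto
      by_cases he : ∃ e, G.Adj a e ∧ G.Adj e b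
      · obtain ⟨e, hae, heb⟩ := he
        by_cases hf : ∃ f, G.Adj a f ∧ G.Adj f c
        · obtain ⟨f, haf, hfc⟩ := hf
          by_cases hef : e = f
          · subst hef
            refine ⟨e, a, fun v => ?_⟩
            rcases hS v with rfl | rfl | rfl | hv | ⟨hp, _⟩ | ⟨hp, _⟩
            · exact Or.inr (Or.inl rfl)
            · exact Or.inr (Or.inr (Or.inl heb))
            · exact Or.inr (Or.inr (Or.inl hfc))
            · exact Or.inr (Or.inr (Or.inr (Or.inl hv)))
            · exact absurd hp hPb
            · exact absurd hp hPc
          · refine ⟨e, f, fun v => ?_⟩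
            rcases hS v with rfl | rfl | rfl | hv | ⟨hp, _⟩ | ⟨hp, _⟩
            · exact Or.inr (Or.inr (Or.inl hae.symm))
            · exact Or.inr (Or.inr (Or.inl heb))
            · exact Or.inr (Or.inr (Or.inr (Or.inl hfc)))
            · exact Or.inr (Or.inr (Or.inr (Or.inr ⟨hef, a, hae.symm, haf.symm, hv⟩)))
            · exact absurd hp hPb
            · exact absurd hp hPc
        · -- c's neighbor must be b
          obtain ⟨g, hcg⟩ := exists_adj hconn c a (Ne.symm hac)
          have hgb : g = b := by
            rcases hS g with rfl | rfl | rfl | hv | ⟨hp, _⟩ | ⟨hp, _⟩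
            · exact absurd hcg.symm hac'
            · rfl
            · exact absurd hcg (G.loopless.irrefl _)
            · exact absurd ⟨hv, hcg.symm⟩ (fun hh => hf ⟨g, hh⟩)
            · exact absurd hp hPb
            · exact absurd hp hPc
          rw [hgb] at hcg
          refine ⟨a, b, fun v => ?_⟩
          rcases hS v with rfl | rfl | rfl | hv | ⟨hp, _⟩ | ⟨hp, _⟩
          · exact Or.inl rfl
          · exact Or.inr (Or.inl rfl)
          · exact Or.inr (Or.inr (Or.inr (Or.inl hcg.symm)))
          · exact Or.inr (Or.inr (Or.inl hv))
          · exact absurd hp hPb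
          · exact absurd hp hPc
      · -- b's only possible neighbor is c
        have hnb : ∀ x, G.Adj b x → x = c := by
          intro x hbx
          rcases hS x with rfl | rfl | rfl | hv | ⟨hp, _⟩ | ⟨hp, _⟩
          · exact absurd hbx.symm hab'
          · exact absurd hbx (G.loopless.irrefl _)
          · rfl
          · exact absurd ⟨hv, hbx.symm⟩ (fun hh => he ⟨x, hh⟩)
          · exact absurd hp hPb
          · exact absurd hp hPc
        by_cases hf : ∃ f, G.Adj a f ∧ G.Adj f c
        · obtain ⟨f, haf, hfc⟩ := hf
          have hbc2 : G.Adj b c := by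
            obtain ⟨x, hbx⟩ := exists_adj hconn b a (Ne.symm hab)
            have := hnb x hbx
            exact this ▸ hbx
          refine ⟨a, c, fun v => ?_⟩
          rcases hS v with rfl | rfl | rfl | hv | ⟨hp, _⟩ | ⟨hp, _⟩
          · exact Or.inl rfl
          · exact Or.inr (Or.inr (Or.inr (Or.inl hbc2.symm)))
          · exact Or.inr (Or.inl rfl)
          · exact Or.inr (Or.inr (Or.inl hv))
          · exact absurd hp hPb
          · exact absurd hp hPc
        · -- contradiction via connectivity
          exfalso
          have hnc : ∀ x, G.Adj c x → x = b := by
            intro x hcx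
            rcases hS x with rfl | rfl | rfl | hv | ⟨hp, _⟩ | ⟨hp, _⟩
            · exact absurd hcx.symm hac'
            · rfl
            · exact absurd hcx (G.loopless.irrefl _)
            · exact absurd ⟨hv, hcx.symm⟩ (fun hh => hf ⟨x, hh⟩)
            · exact absurd hp hPb
            · exact absurd hp hPc
          obtain ⟨w⟩ := hconn.preconnected b a
          rcases walk_stuck hnb hnc w (Or.inl rfl) with h | h
          · exact hab h
          · exact hac h

lemma dominating_pair [Fintype V] (hconn : G.Connected) (hcard : Fintype.card V ≤ 4) :
    ∃ x y : V, ∀ v, v = x ∨ v = y ∨ G.Adj x v ∨ G.Adj y v := by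
  by_cases hdeg : ∃ x u v, u ≠ v ∧ G.Adj x u ∧ G.Adj x v
  · obtain ⟨x, u, v, huv, hxu, hxv⟩ := hdeg
    by_cases hall : ∀ w, w = x ∨ G.Adj x w
    · exact ⟨x, x, fun w => by rcases hall w with h | h
                               · exact Or.inl h
                               · exact Or.inr (Or.inr (Or.inl h))⟩
    · push_neg at hall
      obtain ⟨w, hwx, hwadj⟩ := hall
      have huniq : ∀ w', w' ≠ x → ¬G.Adj x w' → w' = w := by
        intro w' h1 h2
        by_contra hne
        have hxu' : x ≠ u := hxu.ne
        have hxv' : x ≠ v := hxv.ne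
        have huw : u ≠ w := fun hh => hwadj (by rw [hh] at hxu; exact hxu)
        have hvw : v ≠ w := fun hh => hwadj (by rw [hh] at hxv; exact hxv)
        have huw' : u ≠ w' := fun hh => h2 (by rw [hh] at hxu; exact hxu)
        have hvw' : v ≠ w' := fun hh => h2 (by rw [hh] at hxv; exact hxv)
        have hxw : x ≠ w := fun hh => hwx hh.symm
        have hxw' : x ≠ w' := fun hh => h1 hh.symm
        have hcard5 : ({x, u, v, w, w'} : Finset V).card = 5 := by
          rw [card_insert_of_notMem (by simp [hxu', hxv', hxw, hxw']),
              card_insert_of_notMem (by simp [huv, huw, huw']),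
              card_insert_of_notMem (by simp [hvw, hvw']),
              card_insert_of_notMem (by simp; exact fun hh => hne hh.symm),
              card_singleton]
        have := card_le_univ ({x, u, v, w, w'} : Finset V)
        rw [hcard5] at this
        omega
      obtain ⟨z, hwz⟩ := exists_adj hconn w x hwx
      refine ⟨x, z, fun v' => ?_⟩
      by_cases h1 : v' = x
      · exact Or.inl h1
      · by_cases h2 : G.Adj x v'
        · exact Or.inr (Or.inr (Or.inl h2))
        · have : v' = w := huniq v' h1 h2
          subst this
          exact Or.inr (Or.inr (Or.inr hwz.symm))
  · push_neg at hdeg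
    have hdeg' : ∀ x u v : V, G.Adj x u → G.Adj x v → u = v := by
      intro x u v h1 h2
      by_contra hne
      exact hdeg x u v hne h1 h2
    obtain ⟨p⟩ := hconn.nonempty
    by_cases hone : ∀ v, v = p
    · exact ⟨p, p, fun v => Or.inl (hone v)⟩
    · push_neg at hone
      obtain ⟨r, hrp⟩ := hone
      obtain ⟨q, hpq⟩ := exists_adj hconn p r (Ne.symm hrp)
      refine ⟨p, q, fun v => ?_⟩
      obtain ⟨wlk⟩ := hconn.preconnected p v
      rcases walk_stuck (fun x hx => hdeg' p x q hx hpq)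
        (fun x hx => hdeg' q x p hx hpq.symm) wlk (Or.inl rfl) with h | h
      · exact Or.inl h
      · exact Or.inr (Or.inl h)

end Aux

theorem exists_two_two_distribution_of_restricted_le_four
    {V : Type*} [Fintype V] [DecidableEq V] (G : SimpleGraph V)
    (hconn : G.Connected) (h : optPebblingRes G 2 ≤ 4) :
    ∃ x y : V, Solvable G (fun v => if v = x ∨ v = y then 2 else 0) := by
  have hne : {n | ∃ D : V → ℕ, (∀ v, D v ≤ 2) ∧ Solvable G D ∧ distSize D = n}.Nonempty :=
    ⟨distSize (fun _ : V => 2), (fun _ => 2), fun v => le_refl 2, solvable_full G, rfl⟩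
  obtain ⟨D, hcap, hsolv, hsize⟩ := Nat.sInf_mem hne
  have hsum : ∑ v, D v ≤ 4 := by
    have h4 : distSize D ≤ 4 := hsize ▸ h
    simpa [distSize] using h4
  by_cases hbig : ∃ a, 2 ≤ D a
  · obtain ⟨a, ha2⟩ := hbig
    have ha : D a = 2 := le_antisymm (hcap a) ha2
    by_cases htwo : ∃ b c, b ≠ a ∧ c ≠ a ∧ b ≠ c ∧ 1 ≤ D b ∧ 1 ≤ D c
    · obtain ⟨b, c, hba, hca, hbc, hb1, hc1⟩ := htwo
      have hanb : a ∉ ({b, c} : Finset V) := by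
        simp [Ne.symm hba, Ne.symm hca]
      have hbnc : b ∉ ({c} : Finset V) := by simp [hbc]
      have hsum3 : D a + D b + D c ≤ 4 := by
        have h1 : ∑ v ∈ ({a, b, c} : Finset V), D v ≤ ∑ v, D v :=
          Finset.sum_le_sum_of_subset (subset_univ _)
        rw [Finset.sum_insert hanb, Finset.sum_insert hbnc, Finset.sum_singleton] at h1
        have h2 := le_trans h1 hsum
        clear * - h2
        omega
      have hrest : ∀ v, v ≠ a → v ≠ b → v ≠ c → D v = 0 := by
        intro v hva hvb hvc
        by_contra h0
        have hv1 : 1 ≤ D v := Nat.one_le_iff_ne_zero.2 h0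
        have hvn : v ∉ ({a, b, c} : Finset V) := by simp [hva, hvb, hvc]
        have h1 : ∑ u ∈ insert v ({a, b, c} : Finset V), D u ≤ ∑ u, D u :=
          Finset.sum_le_sum_of_subset (subset_univ _)
        rw [Finset.sum_insert hvn, Finset.sum_insert hanb, Finset.sum_insert hbnc,
          Finset.sum_singleton] at h1
        have h2 := le_trans h1 hsum
        clear * - h2 hv1 ha hb1 hc1
        omega
      have hDb : D b = 1 := by
        have := hcap b; clear * - this hsum3 ha hb1 hc1; omega
      have hDc : D c = 1 := by
        have := hcap c; clear * - this hsum3 ha hb1 hc1; omega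
      have hD : D = fun v => if v = a then 2 else if v = b ∨ v = c then 1 else 0 := by
        funext v
        by_cases hva : v = a
        · subst hva; simp [ha]
        · by_cases hvb : v = b
          · subst hvb; simp [hva, hDb]
          · by_cases hvc : v = c
            · subst hvc; simp [hva, hvb, hDc]
            · simp [hva, hvb, hvc, hrest v hva hvb hvc]
      rw [hD] at hsolv
      have hS : ∀ v, v = a ∨ v = b ∨ v = c ∨ G.Adj a v ∨
          ((G.Adj a b ∨ (G.Adj a c ∧ G.Adj c b)) ∧ G.Adj b v) ∨
          ((G.Adj a c ∨ (G.Adj a b ∧ G.Adj b c)) ∧ G.Adj c v) := by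
        intro v
        obtain ⟨D', hreach, hv⟩ := hsolv v
        exact (inv_of_reaches (Ne.symm hba) (Ne.symm hca) hbc hreach).2.1 v hv
      obtain ⟨x, y, hcov⟩ := pick_pair hconn a b c (Ne.symm hba) (Ne.symm hca) hbc hS
      exact ⟨x, y, solvable_pair x y hcov⟩
    · push_neg at htwo
      by_cases hb : ∃ b, b ≠ a ∧ 1 ≤ D b
      · obtain ⟨b, hba, hb1⟩ := hb
        refine ⟨a, b, solvable_mono (D := D) ?_ hsolv⟩
        intro v
        by_cases hva : v = a
        · subst hva; simp [ha]
        · by_cases hvb : v = b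
          · subst hvb; simp [hcap v]
          · have hvlt : D v < 1 := htwo b v hba hva (fun hh => hvb hh.symm) hb1
            simp only [hva, hvb, or_self, if_false]
            clear * - hvlt; omega
      · push_neg at hb
        refine ⟨a, a, solvable_mono (D := D) ?_ hsolv⟩
        intro v
        by_cases hva : v = a
        · subst hva; simp [ha]
        · have hvlt := hb v hva
          simp only [hva, or_self, if_false]
          clear * - hvlt; omega
  · push_neg at hbig
    have hsmall : ∀ v, D v ≤ 1 := fun v => by have := hbig v; clear * - this; omega
    have hall1 : ∀ v, 1 ≤ D v := by
      intro v
      obtain ⟨D', hr, hv⟩ := hsolv v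
      rw [eq_of_reaches_of_small hsmall hr] at hv
      exact hv
    have hcard : Fintype.card V ≤ 4 := by
      have h1 : ∑ v : V, 1 ≤ ∑ v, D v := Finset.sum_le_sum (fun v _ => hall1 v)
      simp only [Finset.sum_const, smul_eq_mul, mul_one, Finset.card_univ] at h1
      exact le_trans h1 hsum
    obtain ⟨x, y, hcov⟩ := dominating_pair hconn hcard
    refine ⟨x, y, solvable_pair x y (fun v => ?_)⟩
    rcases hcov v with h | h | h | h
    · exact Or.inl h
    · exact Or.inr (Or.inl h)
    · exact Or.inr (Or.inr (Or.inl h))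
    · exact Or.inr (Or.inr (Or.inr (Or.inl h)))
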